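/- Let G be a finite simple graph with N ≥ 3 vertices and clique-width at most k. Then there exists a set S ⊆ V(G) with N/3 ≤ |S| ≤ 2N/3 such that the vertices of S have at most k pairwise distinct neighborhoods outside S, i.e., the set { N_G(v) ∖ S : v ∈ S } has cardinality at most k (where N_G(v) denotes the neighborhood of v in G). -/

import Mathlib

/-- Expressions building labeled graphs (labels are natural numbers; the label `0` plays
the role of the label "1" of the paper): a single vertex carrying the first label,
relabeling all vertices with label `i` to label `j`, adding all edges between vertices
with label `i` and vertices with label `j`, and disjoint union. -/
inductive CW : Type where
  | single : CW
  | relabel (i j : ℕ) (t : CW) : CW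
  | addEdges (i j : ℕ) (t : CW) : CW
  | union (s t : CW) : CW

/-- The vertex set of the labeled graph described by a clique-width expression. -/
def CW.verts : CW → Type
  | .single => Unit
  | .relabel _ _ t => t.verts
  | .addEdges _ _ t => t.verts
  | .union s t => s.verts ⊕ t.verts

/-- The labeling of the labeled graph described by a clique-width expression. -/
def CW.lab : (t : CW) → t.verts → ℕ
  | .single, _ => 0
  | .relabel i j t, v => if t.lab v = i then j else t.lab v
  | .addEdges _ _ t, v => t.lab v
  | .union s t, v => Sum.elim s.lab t.lab v

/-- The underlying simple graph of the labeled graph described by a clique-width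
expression. -/
def CW.graph : (t : CW) → SimpleGraph t.verts
  | .single => ⊥
  | .relabel _ _ t => t.graph
  | .addEdges i j t =>
      t.graph ⊔ SimpleGraph.fromRel (fun u v => t.lab u = i ∧ t.lab v = j)
  | .union s t => SimpleGraph.fromRel (Sum.LiftRel s.graph.Adj t.graph.Adj)

/-- All labels used in the expression are among `0, …, k-1`, i.e. the expression uses at
most `k` labels. -/
def CW.labelsLt (k : ℕ) : CW → Prop
  | .single => 0 < k
  | .relabel i j t => i < k ∧ j < k ∧ t.labelsLt k
  | .addEdges i j t => i < k ∧ j < k ∧ t.labelsLt k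
  | .union s t => s.labelsLt k ∧ t.labelsLt k

/-- A simple graph has clique-width at most `k` if it is isomorphic to the graph built
by a clique-width expression using at most `k` labels. -/
def HasCliqueWidthLE {V : Type} (G : SimpleGraph V) (k : ℕ) : Prop :=
  ∃ t : CW, t.labelsLt k ∧ Nonempty (G ≃g t.graph)


instance CW.instFinite : ∀ t : CW, Finite t.verts
  | .single => inferInstanceAs (Finite Unit)
  | .relabel _ _ t => t.instFinite
  | .addEdges _ _ t => t.instFinite
  | .union s t =>
      have := s.instFinite; have := t.instFinite
      inferInstanceAs (Finite (_ ⊕ _))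

lemma CW.lab_lt {k : ℕ} : ∀ t : CW, t.labelsLt k → ∀ v, t.lab v < k
  | .single, h, _ => h
  | .relabel i j t, ⟨_, hj, ht⟩, v => by
      show (if t.lab v = i then j else t.lab v) < k
      split
      · exact hj
      · exact lab_lt t ht v
  | .addEdges i j t, ⟨_, _, ht⟩, v => lab_lt t ht v
  | .union s t, ⟨hs, ht⟩, v => by
      cases v with
      | inl a => exact lab_lt s hs a
      | inr a => exact lab_lt t ht a

lemma union_adj_inl_inl (s t : CW) (a b : s.verts) :
    (CW.union s t).graph.Adj (Sum.inl a) (Sum.inl b) ↔ s.graph.Adj a b := by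
  show (SimpleGraph.fromRel (V := s.verts ⊕ t.verts) _).Adj _ _ ↔ _
  rw [SimpleGraph.fromRel_adj]
  simp only [Sum.liftRel_inl_inl, ne_eq, Sum.inl.injEq]
  constructor
  · rintro ⟨hne, h | h⟩
    · exact h
    · exact h.symm
  · intro h
    exact ⟨fun he => h.ne he, Or.inl h⟩

lemma union_adj_inr_inr (s t : CW) (a b : t.verts) :
    (CW.union s t).graph.Adj (Sum.inr a) (Sum.inr b) ↔ t.graph.Adj a b := by
  show (SimpleGraph.fromRel (V := s.verts ⊕ t.verts) _).Adj _ _ ↔ _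
  rw [SimpleGraph.fromRel_adj]
  simp only [Sum.liftRel_inr_inr, ne_eq, Sum.inr.injEq]
  constructor
  · rintro ⟨hne, h | h⟩
    · exact h
    · exact h.symm
  · intro h
    exact ⟨fun he => h.ne he, Or.inl h⟩

lemma union_not_adj_inl_inr (s t : CW) (a : s.verts) (b : t.verts) :
    ¬ (CW.union s t).graph.Adj (Sum.inl a) (Sum.inr b) := by
  show ¬ (SimpleGraph.fromRel (V := s.verts ⊕ t.verts) _).Adj _ _
  rw [SimpleGraph.fromRel_adj]
  rintro ⟨-, h | h⟩ <;> cases h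

lemma key (k : ℕ) (b : ℚ) (hb : 1 ≤ b) :
    ∀ t : CW, t.labelsLt k → b < (Nat.card t.verts : ℚ) →
    ∃ (S : Set t.verts) (f : t.verts → ℕ),
      b / 2 < (S.ncard : ℚ) ∧ (S.ncard : ℚ) ≤ b ∧
      (∀ u ∈ S, f u < k) ∧
      (∀ u ∈ S, ∀ u' ∈ S, f u = f u' → t.lab u = t.lab u') ∧
      (∀ u ∈ S, ∀ u' ∈ S, f u = f u' → ∀ v, v ∉ S →
        (t.graph.Adj u v ↔ t.graph.Adj u' v)) := by
  intro t
  induction t with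
  | single =>
      intro _ hcard
      exfalso
      have : Nat.card CW.single.verts = 1 := by
        show Nat.card Unit = 1; exact Nat.card_unique
      rw [this] at hcard
      push_cast at hcard
      linarith
  | relabel i j t ih =>
      rintro ⟨hi, hj, ht⟩ hcard
      obtain ⟨S, f, h1, h2, h3, h4, h5⟩ := ih ht hcard
      refine ⟨S, f, h1, h2, h3, ?_, h5⟩
      intro u hu u' hu' hf
      have := h4 u hu u' hu' hf
      show (if t.lab u = i then j else t.lab u) = (if t.lab u' = i then j else t.lab u')
      rw [this]
  | addEdges i j t ih =>
      rintro ⟨hi, hj, ht⟩ hcard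
      obtain ⟨S, f, h1, h2, h3, h4, h5⟩ := ih ht hcard
      refine ⟨S, f, h1, h2, h3, h4, ?_⟩
      rintro (u : t.verts) hu (u' : t.verts) hu' hf (v : t.verts) hv
      have hlab := h4 u hu u' hu' hf
      have hadj := h5 u hu u' hu' hf v hv
      have hne : u ≠ v := fun h => hv (h ▸ hu)
      have hne' : u' ≠ v := fun h => hv (h ▸ hu')
      show (t.graph ⊔ SimpleGraph.fromRel (V := t.verts) (fun u v => t.lab u = i ∧ t.lab v = j)).Adj u v ↔
        (t.graph ⊔ SimpleGraph.fromRel (V := t.verts) (fun u v => t.lab u = i ∧ t.lab v = j)).Adj u' v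
      simp only [SimpleGraph.sup_adj, SimpleGraph.fromRel_adj, ne_eq, hne, hne',
        not_false_iff, true_and, hlab, hadj]
  | union s t ihs iht =>
      rintro ⟨hs, ht⟩ hcard
      have hcs : Nat.card (CW.union s t).verts = Nat.card s.verts + Nat.card t.verts :=
        Nat.card_sum
      by_cases hbs : b < (Nat.card s.verts : ℚ)
      · obtain ⟨S, f, h1, h2, h3, h4, h5⟩ := ihs hs hbs
        refine ⟨Sum.inl '' S, Sum.elim f (fun _ => 0), ?_, ?_, ?_, ?_, ?_⟩
        · rwa [show (Sum.inl '' S : Set (CW.union s t).verts).ncard = S.ncard from Set.ncard_image_of_injective _ Sum.inl_injective]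
        · rwa [show (Sum.inl '' S : Set (CW.union s t).verts).ncard = S.ncard from Set.ncard_image_of_injective _ Sum.inl_injective]
        · rintro u ⟨a, ha, rfl⟩; exact h3 a ha
        · rintro u ⟨a, ha, rfl⟩ u' ⟨a', ha', rfl⟩ hf
          exact h4 a ha a' ha' hf
        · rintro u ⟨a, ha, rfl⟩ u' ⟨a', ha', rfl⟩ hf v hv
          cases v with
          | inl x =>
              have hx : x ∉ S := fun h => hv ⟨x, h, rfl⟩
              rw [union_adj_inl_inl, union_adj_inl_inl]
              exact h5 a ha a' ha' hf x hx
          | inr x =>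
              simp only [union_not_adj_inl_inr]
      · by_cases hbt : b < (Nat.card t.verts : ℚ)
        · obtain ⟨S, f, h1, h2, h3, h4, h5⟩ := iht ht hbt
          refine ⟨Sum.inr '' S, Sum.elim (fun _ => 0) f, ?_, ?_, ?_, ?_, ?_⟩
          · rwa [show (Sum.inr '' S : Set (CW.union s t).verts).ncard = S.ncard from Set.ncard_image_of_injective _ Sum.inr_injective]
          · rwa [show (Sum.inr '' S : Set (CW.union s t).verts).ncard = S.ncard from Set.ncard_image_of_injective _ Sum.inr_injective]
          · rintro u ⟨a, ha, rfl⟩; exact h3 a ha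
          · rintro u ⟨a, ha, rfl⟩ u' ⟨a', ha', rfl⟩ hf
            exact h4 a ha a' ha' hf
          · rintro u ⟨a, ha, rfl⟩ u' ⟨a', ha', rfl⟩ hf v hv
            cases v with
            | inl x =>
                constructor <;> intro h <;>
                  exact absurd h.symm (union_not_adj_inl_inr s t x _)
            | inr x =>
                have hx : x ∉ S := fun h => hv ⟨x, h, rfl⟩
                rw [union_adj_inr_inr, union_adj_inr_inr]
                exact h5 a ha a' ha' hf x hx
        · push_neg at hbs hbt
          rw [hcs] at hcard
          push_cast at hcard
          by_cases hst : Nat.card t.verts ≤ Nat.card s.verts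
          · refine ⟨Set.range Sum.inl, Sum.elim s.lab (fun _ => 0), ?_, ?_, ?_, ?_, ?_⟩
            · rw [show (Set.range Sum.inl : Set (CW.union s t).verts).ncard = Nat.card s.verts from
                Set.ncard_range_of_injective Sum.inl_injective]
              have : (Nat.card t.verts : ℚ) ≤ (Nat.card s.verts : ℚ) := by exact_mod_cast hst
              linarith
            · rw [show (Set.range Sum.inl : Set (CW.union s t).verts).ncard = Nat.card s.verts from
                Set.ncard_range_of_injective Sum.inl_injective]
              exact hbs
            · rintro u ⟨a, rfl⟩; exact CW.lab_lt s hs a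
            · rintro u ⟨a, rfl⟩ u' ⟨a', rfl⟩ hf
              exact hf
            · rintro u ⟨a, rfl⟩ u' ⟨a', rfl⟩ hf v hv
              cases v with
              | inl x => exact absurd ⟨x, rfl⟩ hv
              | inr x => simp only [union_not_adj_inl_inr]
          · push_neg at hst
            refine ⟨Set.range Sum.inr, Sum.elim (fun _ => 0) t.lab, ?_, ?_, ?_, ?_, ?_⟩
            · rw [show (Set.range Sum.inr : Set (CW.union s t).verts).ncard = Nat.card t.verts from
                Set.ncard_range_of_injective Sum.inr_injective]
              have : (Nat.card s.verts : ℚ) ≤ (Nat.card t.verts : ℚ) := by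
                exact_mod_cast hst.le
              linarith
            · rw [show (Set.range Sum.inr : Set (CW.union s t).verts).ncard = Nat.card t.verts from
                Set.ncard_range_of_injective Sum.inr_injective]
              exact hbt
            · rintro u ⟨a, rfl⟩; exact CW.lab_lt t ht a
            · rintro u ⟨a, rfl⟩ u' ⟨a', rfl⟩ hf
              exact hf
            · rintro u ⟨a, rfl⟩ u' ⟨a', rfl⟩ hf v hv
              cases v with
              | inl x =>
                  constructor <;> intro h <;>
                    exact absurd h.symm (union_not_adj_inl_inr s t x _)
              | inr x => exact absurd ⟨x, rfl⟩ hv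

/-- If a finite graph `G` with `N ≥ 3` vertices has clique-width at most `k`, then there
is a set `S` of vertices with `N/3 ≤ |S| ≤ 2N/3` such that the vertices of `S` have at
most `k` pairwise distinct neighbourhoods outside of `S`. -/
theorem balanced_separator_of_cliqueWidth (V : Type) [Fintype V]
    (G : SimpleGraph V) (k : ℕ) (hN : 3 ≤ Fintype.card V)
    (hcw : HasCliqueWidthLE G k) :
    ∃ S : Set V,
      (Fintype.card V : ℚ) / 3 ≤ (S.ncard : ℚ) ∧
      (S.ncard : ℚ) ≤ 2 * (Fintype.card V : ℚ) / 3 ∧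
      ((fun v => G.neighborSet v \ S) '' S).ncard ≤ k := by
  obtain ⟨t, hlab, ⟨e⟩⟩ := hcw
  set N := Fintype.card V with hNdef
  have hNt : Nat.card t.verts = N := by
    rw [← Nat.card_congr e.toEquiv, Nat.card_eq_fintype_card]
  have hN1 : (1 : ℚ) ≤ 2 * (N : ℚ) / 3 := by
    have : (3 : ℚ) ≤ (N : ℚ) := by exact_mod_cast hN
    linarith
  have hNb : 2 * (N : ℚ) / 3 < (Nat.card t.verts : ℚ) := by
    rw [hNt]
    have : (3 : ℚ) ≤ (N : ℚ) := by exact_mod_cast hN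
    linarith
  obtain ⟨S, f, h1, h2, h3, -, h5⟩ := key k (2 * (N : ℚ) / 3) hN1 t hlab hNb
  set SV : Set V := ⇑e.symm '' S with hSVdef
  have hmem : ∀ w : V, w ∈ SV ↔ e w ∈ S := by
    intro w
    constructor
    · rintro ⟨x, hx, rfl⟩
      simpa using hx
    · intro hw
      exact ⟨e w, hw, by simp⟩
  have hcardSV : SV.ncard = S.ncard :=
    Set.ncard_image_of_injective _ e.symm.toEquiv.injective
  refine ⟨SV, ?_, ?_, ?_⟩
  · rw [hcardSV]
    have := h1
    linarith
  · rw [hcardSV]; exact h2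
  · -- neighborhoods determined by f ∘ e
    have hnbr : ∀ u ∈ SV, ∀ u' ∈ SV, f (e u) = f (e u') →
        G.neighborSet u \ SV = G.neighborSet u' \ SV := by
      intro u hu u' hu' hf
      ext w
      simp only [Set.mem_diff, SimpleGraph.mem_neighborSet]
      constructor
      · rintro ⟨hadj, hw⟩
        refine ⟨?_, hw⟩
        have hv : e w ∉ S := fun h => hw ((hmem w).2 h)
        have := (h5 (e u) ((hmem u).1 hu) (e u') ((hmem u').1 hu') hf (e w) hv).1
          (e.map_adj_iff.2 hadj)
        exact e.map_adj_iff.1 this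
      · rintro ⟨hadj, hw⟩
        refine ⟨?_, hw⟩
        have hv : e w ∉ S := fun h => hw ((hmem w).2 h)
        have := (h5 (e u) ((hmem u).1 hu) (e u') ((hmem u').1 hu') hf (e w) hv).2
          (e.map_adj_iff.2 hadj)
        exact e.map_adj_iff.1 this
    set g : V → ℕ := fun v => f (e v) with hgdef
    classical
    set F : ℕ → Set V := fun n =>
      if h : ∃ v, v ∈ SV ∧ g v = n then G.neighborSet h.choose \ SV else ∅ with hFdef
    have hFg : ∀ v ∈ SV, F (g v) = G.neighborSet v \ SV := by
      intro v hv
      have hex : ∃ u, u ∈ SV ∧ g u = g v := ⟨v, hv, rfl⟩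
      rw [hFdef]
      simp only [hex, dif_pos]
      exact hnbr hex.choose hex.choose_spec.1 v hv hex.choose_spec.2
    have himg : (fun v => G.neighborSet v \ SV) '' SV = F '' (g '' SV) := by
      exact (Set.image_congr (fun v hv => (hFg v hv).symm)).trans
        (Set.image_image F g SV).symm
    rw [himg]
    calc (F '' (g '' SV)).ncard ≤ (g '' SV).ncard := Set.ncard_image_le (Set.toFinite _)
      _ ≤ ((Finset.range k : Finset ℕ) : Set ℕ).ncard := by
          apply Set.ncard_le_ncard _ (Set.toFinite _)
          rintro n ⟨v, hv, rfl⟩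
          simp only [Finset.coe_range, Set.mem_Iio]
          exact h3 (e v) ((hmem v).1 hv)
      _ = k := by rw [Set.ncard_coe_finset, Finset.card_range]
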